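/- arXiv:1202.1209 — 2 statements merged into one kernel-verified Lean document; each statement's English description precedes it below -/
import Mathlib

section
/- The set C is convex. Precisely: if (Rc,R1) and (Rc',R1') both belong to C, then for every λ ∈ [0,1] the pair (λRc+(1−λ)Rc', λR1+(1−λ)R1') also belongs to C. -/
open scoped BigOperators

noncomputable section

/-- Shannon mutual information `I(A;B)` of a joint pmf `p` on finite alphabets
(the conventions for vanishing probabilities are handled by `Real.log 0 = 0`
and division by zero being zero). -/
def mi {A B : Type} [Fintype A] [Fintype B] (p : A → B → ℝ) : ℝ :=
  ∑ a, ∑ b, p a b * Real.log (p a b / ((∑ b', p a b') * (∑ a', p a' b)))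

/-- Conditional mutual information `I(A;B|C)` of a joint pmf `p` on finite alphabets. -/
def cmi {A B C : Type} [Fintype A] [Fintype B] [Fintype C] (p : A → B → C → ℝ) : ℝ :=
  ∑ a, ∑ b, ∑ c, p a b c *
    Real.log (((∑ a', ∑ b', p a' b' c) * p a b c) /
      ((∑ b', p a b' c) * (∑ a', p a' b c)))

/-- A two-user state-dependent discrete memoryless multiple access channel:
a state pmf `Q` on the finite state alphabet `S` and a channel transition
pmf `W y|x1,x2,s` with finite input alphabets `X1`, `X2` and output alphabet `Y`. -/
structure DMMAC (S X1 X2 Y : Type) [Fintype S] [Fintype X1] [Fintype X2] [Fintype Y] where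
  Q : S → ℝ
  W : X1 → X2 → S → Y → ℝ
  Q_nonneg : ∀ s, 0 ≤ Q s
  Q_sum : ∑ s, Q s = 1
  W_nonneg : ∀ x1 x2 s y, 0 ≤ W x1 x2 s y
  W_sum : ∀ x1 x2 s, ∑ y, W x1 x2 s y = 1

variable {S X1 X2 Y : Type} [Fintype S] [Fintype X1] [Fintype X2] [Fintype Y]

/-- An element of the class 𝒫: auxiliary finite alphabets `U`, `V` together with a joint
distribution of `(S,U,V,X₁,X₂,Y)` factorizing as
`Q_S(s)·P(x₂)·P(v|s,x₂)·P(u,x₁|s,v,x₂)·W(y|x₁,x₂,s)`. -/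
structure AuxP (ch : DMMAC S X1 X2 Y) where
  U : Type
  V : Type
  [fU : Fintype U]
  [fV : Fintype V]
  pX2 : X2 → ℝ
  pV : S → X2 → V → ℝ
  pUX1 : S → V → X2 → U → X1 → ℝ
  pX2_nonneg : ∀ x2, 0 ≤ pX2 x2
  pX2_sum : ∑ x2, pX2 x2 = 1
  pV_nonneg : ∀ s x2 v, 0 ≤ pV s x2 v
  pV_sum : ∀ s x2, ∑ v, pV s x2 v = 1
  pUX1_nonneg : ∀ s v x2 u x1, 0 ≤ pUX1 s v x2 u x1
  pUX1_sum : ∀ s v x2, ∑ u, ∑ x1, pUX1 s v x2 u x1 = 1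

attribute [instance] AuxP.fU AuxP.fV

namespace AuxP

variable {ch : DMMAC S X1 X2 Y}

/-- The joint pmf of `(S,U,V,X₁,X₂,Y)` induced by an element of 𝒫. -/
def joint (d : AuxP ch) (s : S) (u : d.U) (v : d.V) (x1 : X1) (x2 : X2) (y : Y) : ℝ :=
  ch.Q s * d.pX2 x2 * d.pV s x2 v * d.pUX1 s v x2 u x1 * ch.W x1 x2 s y

/-- `I(U;Y|V,X₂)` -/
def iUY_VX2 (d : AuxP ch) : ℝ :=
  cmi (fun (u : d.U) (y : Y) (c : d.V × X2) => ∑ s, ∑ x1, d.joint s u c.1 x1 c.2 y)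

/-- `I(U;S|V,X₂)` -/
def iUS_VX2 (d : AuxP ch) : ℝ :=
  cmi (fun (u : d.U) (s : S) (c : d.V × X2) => ∑ x1, ∑ y, d.joint s u c.1 x1 c.2 y)

/-- `I(U,V,X₂;Y)` -/
def iUVX2Y (d : AuxP ch) : ℝ :=
  mi (fun (a : d.U × d.V × X2) (y : Y) => ∑ s, ∑ x1, d.joint s a.1 a.2.1 x1 a.2.2 y)

/-- `I(U,V,X₂;S)` -/
def iUVX2S (d : AuxP ch) : ℝ :=
  mi (fun (a : d.U × d.V × X2) (s : S) => ∑ x1, ∑ y, d.joint s a.1 a.2.1 x1 a.2.2 y)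

/-- `I(V,X₂;Y)` -/
def iVX2Y (d : AuxP ch) : ℝ :=
  mi (fun (b : d.V × X2) (y : Y) => ∑ s, ∑ u, ∑ x1, d.joint s u b.1 x1 b.2 y)

/-- `I(V,X₂;S)` -/
def iVX2S (d : AuxP ch) : ℝ :=
  mi (fun (b : d.V × X2) (s : S) => ∑ u, ∑ x1, ∑ y, d.joint s u b.1 x1 b.2 y)

/-- `I(X₂;Y)` -/
def iX2Y (d : AuxP ch) : ℝ :=
  mi (fun (x2 : X2) (y : Y) => ∑ s, ∑ u, ∑ v, ∑ x1, d.joint s u v x1 x2 y)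

/-- `I(V;S|X₂)` -/
def iVS_X2 (d : AuxP ch) : ℝ :=
  cmi (fun (v : d.V) (s : S) (x2 : X2) => ∑ u, ∑ x1, ∑ y, d.joint s u v x1 x2 y)

/-- `I(U,V;Y|X₂)` -/
def iUVY_X2 (d : AuxP ch) : ℝ :=
  cmi (fun (a : d.U × d.V) (y : Y) (x2 : X2) => ∑ s, ∑ x1, d.joint s a.1 a.2 x1 x2 y)

end AuxP

/-- The region 𝒞. -/
def regionC (ch : DMMAC S X1 X2 Y) : Set (ℝ × ℝ) :=
  {r | 0 ≤ r.1 ∧ 0 ≤ r.2 ∧ ∃ d : AuxP ch,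
    r.2 ≤ d.iUY_VX2 - d.iUS_VX2 ∧ r.1 + r.2 ≤ d.iUVX2Y - d.iUVX2S}

/-- Average probability of error of a code `(φ1, φ2, ψ)`: Encoder 1 knows the whole state
sequence non-causally, Encoder 2 knows it strictly causally, messages are uniform and
independent, states are i.i.d. `Q` and the channel is memoryless. -/
def Perr (ch : DMMAC S X1 X2 Y) {n Mc M1 : ℕ}
    (φ1 : Fin Mc → Fin M1 → (Fin n → S) → (Fin n → X1))
    (φ2 : Fin Mc → (i : Fin n) → (Fin i.val → S) → X2)
    (ψ : (Fin n → Y) → Fin Mc × Fin M1) : ℝ :=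
  (1 / ((Mc : ℝ) * (M1 : ℝ))) *
    ∑ wc : Fin Mc, ∑ w1 : Fin M1, ∑ s : Fin n → S, ∑ y : Fin n → Y,
      ((∏ i : Fin n, ch.Q (s i)) *
        ∏ i : Fin n,
          ch.W (φ1 wc w1 s i) (φ2 wc i (fun j => s ⟨j.1, j.2.trans i.2⟩)) (s i) (y i)) *
      (if ψ y = (wc, w1) then 0 else 1)

/-- A rate pair `(Rc, R1)` is achievable if for every `ε > 0` there is an
`(Mc, M1, n, ε)` code with `Mc ≥ 2^{nRc}` and `M1 ≥ 2^{nR1}`. -/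
def Achievable (ch : DMMAC S X1 X2 Y) (Rc R1 : ℝ) : Prop :=
  0 ≤ Rc ∧ 0 ≤ R1 ∧
  ∀ ε : ℝ, 0 < ε →
    ∃ (n Mc M1 : ℕ) (φ1 : Fin Mc → Fin M1 → (Fin n → S) → (Fin n → X1))
      (φ2 : Fin Mc → (i : Fin n) → (Fin i.val → S) → X2)
      (ψ : (Fin n → Y) → Fin Mc × Fin M1),
      0 < n ∧ (2 : ℝ) ^ ((n : ℝ) * Rc) ≤ (Mc : ℝ) ∧ (2 : ℝ) ^ ((n : ℝ) * R1) ≤ (M1 : ℝ) ∧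
      Perr ch φ1 φ2 ψ ≤ ε

/-- The capacity region: the closure of the set of achievable rate pairs. -/
def capacityRegion (ch : DMMAC S X1 X2 Y) : Set (ℝ × ℝ) :=
  closure {r : ℝ × ℝ | Achievable ch r.1 r.2}




/-! ### Auxiliary lemmas for the convexity proof -/

lemma sum_inj_zero {K A : Type} [Fintype K] [Fintype A] (G : A → K)
    (hG : Function.Injective G) (F : K → ℝ) (h0 : ∀ k, (∀ a, G a ≠ k) → F k = 0) :
    ∑ k, F k = ∑ a, F (G a) :=
  (Finset.sum_of_injOn G (hG.injOn) (fun _ _ => Finset.mem_univ _)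
    (fun k _ hk => h0 k (fun a hak => hk ⟨a, Finset.mem_coe.2 (Finset.mem_univ a), hak⟩))
    (fun _ _ => rfl)).symm
lemma lcancel1 (l x r c : ℝ) :
    l * x * Real.log ((l * x) / ((l * r) * c)) = l * (x * Real.log (x / (r * c))) := by
  rcases eq_or_ne l 0 with h | h
  · simp [h]
  · have : (l * x) / ((l * r) * c) = x / (r * c) := by
      rw [mul_assoc, mul_div_mul_left _ _ h]
    rw [this]; ring
lemma lcancel2 (l x m r c : ℝ) :
    l * x * Real.log (((l * m) * (l * x)) / ((l * r) * (l * c))) =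
      l * (x * Real.log ((m * x) / (r * c))) := by
  rcases eq_or_ne l 0 with h | h
  · simp [h]
  · have : ((l * m) * (l * x)) / ((l * r) * (l * c)) = (m * x) / (r * c) := by
      rw [show (l * m) * (l * x) = (l * l) * (m * x) by ring,
        show (l * r) * (l * c) = (l * l) * (r * c) by ring,
        mul_div_mul_left _ _ (mul_ne_zero h h)]
    rw [this]; ring
lemma term_split (x r c m : ℝ) (hx : 0 ≤ x) (hr : x ≤ r) (hc : x ≤ c)
    (hm : 0 < x → 0 < m) :
    x * Real.log (x / (r * m)) = x * Real.log (x / (r * c)) + x * Real.log (c / m) := by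
  rcases eq_or_lt_of_le hx with h0 | h0
  · simp [← h0]
  · have hr' : 0 < r := lt_of_lt_of_le h0 hr
    have hc' : 0 < c := lt_of_lt_of_le h0 hc
    have hm' : 0 < m := hm h0
    rw [Real.log_div (ne_of_gt h0) (by positivity), Real.log_div (ne_of_gt h0) (by positivity),
      Real.log_div (ne_of_gt hc') (ne_of_gt hm'), Real.log_mul (ne_of_gt hr') (ne_of_gt hm'),
      Real.log_mul (ne_of_gt hr') (ne_of_gt hc')]
    ring
lemma mul_log_div_ge (x y : ℝ) (hx : 0 ≤ x) (hy : 0 ≤ y) (h : 0 < x → 0 < y) :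
    x - y ≤ x * Real.log (x / y) := by
  rcases eq_or_lt_of_le hx with h0 | h0
  · simp [← h0]; linarith
  · have hy' : 0 < y := h h0
    have hlog : Real.log (y / x) ≤ y / x - 1 := Real.log_le_sub_one_of_pos (by positivity)
    have hinv : Real.log (x / y) = -Real.log (y / x) := by
      rw [← Real.log_inv]; congr 1; field_simp
    rw [hinv]
    have h2 : x * Real.log (y / x) ≤ x * (y / x - 1) :=
      mul_le_mul_of_nonneg_left hlog hx
    have h3 : x * (y / x - 1) = y - x := by field_simp
    nlinarith

set_option linter.unusedSectionVars false

section coreMix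
variable {A A' B C C' K : Type} [Fintype A] [Fintype A'] [Fintype B] [Fintype C]
  [Fintype C'] [Fintype K]

lemma cmi_mix (l : ℝ) (p : A → B → C → ℝ) (p' : A' → B → C' → ℝ)
    (q : (A ⊕ A') → B → K → ℝ) (e : C → K) (e' : C' → K)
    (he : Function.Injective e) (he' : Function.Injective e')
    (hdis : ∀ c c', e c ≠ e' c')
    (hq1 : ∀ a b c, q (Sum.inl a) b (e c) = l * p a b c)
    (hq2 : ∀ a b c, q (Sum.inr a) b (e' c) = (1 - l) * p' a b c)
    (hq0 : ∀ a b k, (∀ c, e c ≠ k) → q (Sum.inl a) b k = 0)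
    (hq0' : ∀ a b k, (∀ c, e' c ≠ k) → q (Sum.inr a) b k = 0) :
    cmi q = l * cmi p + (1 - l) * cmi p' := by
  have hML : ∀ b c, (∑ x : A ⊕ A', q x b (e c)) = l * ∑ a, p a b c := by
    intro b c
    rw [Fintype.sum_sum_type]
    simp only [hq1, fun a => hq0' a b (e c) (fun c' hc' => (hdis c c' hc'.symm).elim)]
    rw [← Finset.mul_sum]
    simp
  have hMR : ∀ b c, (∑ x : A ⊕ A', q x b (e' c)) = (1 - l) * ∑ a, p' a b c := by
    intro b c
    rw [Fintype.sum_sum_type]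
    simp only [hq2, fun a => hq0 a b (e' c) (hdis · c)]
    rw [← Finset.mul_sum]
    simp
  unfold cmi
  rw [Fintype.sum_sum_type]
  have hL : (∑ a : A, ∑ b, ∑ k, q (Sum.inl a) b k *
      Real.log (((∑ x, ∑ b', q x b' k) * q (Sum.inl a) b k) /
        ((∑ b', q (Sum.inl a) b' k) * (∑ x, q x b k)))) = l * cmi p := by
    have step : (∑ a : A, ∑ b, ∑ k, q (Sum.inl a) b k *
        Real.log (((∑ x, ∑ b', q x b' k) * q (Sum.inl a) b k) /
          ((∑ b', q (Sum.inl a) b' k) * (∑ x, q x b k)))) =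
        ∑ a, ∑ b, ∑ c, l * (p a b c *
          Real.log (((∑ a', ∑ b', p a' b' c) * p a b c) /
            ((∑ b', p a b' c) * (∑ a', p a' b c)))) := by
      refine Finset.sum_congr rfl fun a _ => Finset.sum_congr rfl fun b _ => ?_
      rw [sum_inj_zero e he _ (fun k hk => by rw [hq0 a b k hk, zero_mul])]
      refine Finset.sum_congr rfl fun c _ => ?_
      have h1 : (∑ x, ∑ b', q x b' (e c)) = l * ∑ a', ∑ b', p a' b' c :=
        calc (∑ x, ∑ b', q x b' (e c)) = ∑ b', ∑ x, q x b' (e c) := Finset.sum_comm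
          _ = ∑ b', l * ∑ a', p a' b' c := Finset.sum_congr rfl fun b' _ => hML b' c
          _ = l * ∑ b', ∑ a', p a' b' c := by rw [Finset.mul_sum]
          _ = l * ∑ a', ∑ b', p a' b' c := by rw [Finset.sum_comm]
      have h2 : (∑ b', q (Sum.inl a) b' (e c)) = l * ∑ b', p a b' c := by
        simp only [hq1]; rw [← Finset.mul_sum]
      rw [h1, h2, hML b c, hq1]
      exact lcancel2 l (p a b c) _ _ _
    rw [step]
    unfold cmi
    simp only [Finset.mul_sum]
  have hR : (∑ a : A', ∑ b, ∑ k, q (Sum.inr a) b k *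
      Real.log (((∑ x, ∑ b', q x b' k) * q (Sum.inr a) b k) /
        ((∑ b', q (Sum.inr a) b' k) * (∑ x, q x b k)))) = (1 - l) * cmi p' := by
    have step : (∑ a : A', ∑ b, ∑ k, q (Sum.inr a) b k *
        Real.log (((∑ x, ∑ b', q x b' k) * q (Sum.inr a) b k) /
          ((∑ b', q (Sum.inr a) b' k) * (∑ x, q x b k)))) =
        ∑ a, ∑ b, ∑ c, (1 - l) * (p' a b c *
          Real.log (((∑ a', ∑ b', p' a' b' c) * p' a b c) /
            ((∑ b', p' a b' c) * (∑ a', p' a' b c)))) := by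
      refine Finset.sum_congr rfl fun a _ => Finset.sum_congr rfl fun b _ => ?_
      rw [sum_inj_zero e' he' _ (fun k hk => by rw [hq0' a b k hk, zero_mul])]
      refine Finset.sum_congr rfl fun c _ => ?_
      have h1 : (∑ x, ∑ b', q x b' (e' c)) = (1 - l) * ∑ a', ∑ b', p' a' b' c :=
        calc (∑ x, ∑ b', q x b' (e' c)) = ∑ b', ∑ x, q x b' (e' c) := Finset.sum_comm
          _ = ∑ b', (1 - l) * ∑ a', p' a' b' c := Finset.sum_congr rfl fun b' _ => hMR b' c
          _ = (1 - l) * ∑ b', ∑ a', p' a' b' c := by rw [Finset.mul_sum]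
          _ = (1 - l) * ∑ a', ∑ b', p' a' b' c := by rw [Finset.sum_comm]
      have h2 : (∑ b', q (Sum.inr a) b' (e' c)) = (1 - l) * ∑ b', p' a b' c := by
        simp only [hq2]; rw [← Finset.mul_sum]
      rw [h1, h2, hMR b c, hq2]
      exact lcancel2 (1 - l) (p' a b c) _ _ _
    rw [step]
    unfold cmi
    simp only [Finset.mul_sum]
  rw [hL, hR]
  rfl

lemma Gelim_inj {e : A → K} {e' : A' → K} (he : Function.Injective e)
    (he' : Function.Injective e') (hdis : ∀ a a', e a ≠ e' a') :
    Function.Injective (Sum.elim e e') := by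
  intro x y hxy
  cases x with
  | inl a => cases y with
    | inl b => simp only [Sum.elim_inl] at hxy; rw [he hxy]
    | inr b => exact (hdis a b hxy).elim
  | inr a => cases y with
    | inl b => exact (hdis b a hxy.symm).elim
    | inr b => simp only [Sum.elim_inr] at hxy; rw [he' hxy]

lemma mi_mix_eq (l : ℝ) (p : A → B → ℝ) (p' : A' → B → ℝ) (q : K → B → ℝ)
    (e : A → K) (e' : A' → K) (he : Function.Injective e) (he' : Function.Injective e')
    (hdis : ∀ a a', e a ≠ e' a')
    (hq1 : ∀ a b, q (e a) b = l * p a b) (hq2 : ∀ a b, q (e' a) b = (1 - l) * p' a b)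
    (hq0 : ∀ k, (∀ a, e a ≠ k) → (∀ a', e' a' ≠ k) → ∀ b, q k b = 0)
    (hcol : ∀ b, ∑ a, p a b = ∑ a', p' a' b) :
    mi q = l * mi p + (1 - l) * mi p' := by
  have hGinj : Function.Injective (Sum.elim e e') := Gelim_inj he he' hdis
  have hq0' : ∀ k, (∀ x : A ⊕ A', Sum.elim e e' x ≠ k) → ∀ b, q k b = 0 :=
    fun k hk b => hq0 k (fun a => hk (Sum.inl a)) (fun a => hk (Sum.inr a)) b
  have hcolq : ∀ b, (∑ k, q k b) = l * (∑ a, p a b) + (1 - l) * (∑ a', p' a' b) := by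
    intro b
    rw [sum_inj_zero (Sum.elim e e') hGinj (fun k => q k b) (fun k hk => hq0' k hk b),
      Fintype.sum_sum_type]
    simp only [Sum.elim_inl, Sum.elim_inr, hq1, hq2]
    rw [← Finset.mul_sum, ← Finset.mul_sum]
  have hrowL : ∀ a, (∑ b', q (e a) b') = l * ∑ b', p a b' := by
    intro a; simp only [hq1]; rw [← Finset.mul_sum]
  have hrowR : ∀ a, (∑ b', q (e' a) b') = (1 - l) * ∑ b', p' a b' := by
    intro a; simp only [hq2]; rw [← Finset.mul_sum]
  have hcolL : ∀ b, (∑ k, q k b) = ∑ a', p a' b := by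
    intro b; rw [hcolq b, ← hcol b]; ring
  have hcolR : ∀ b, (∑ k, q k b) = ∑ a', p' a' b := by
    intro b; rw [hcolq b, hcol b]; ring
  unfold mi
  rw [sum_inj_zero (Sum.elim e e') hGinj _
      (fun k hk => Finset.sum_eq_zero fun b _ => by rw [hq0' k hk b, zero_mul]),
    Fintype.sum_sum_type]
  have hL : (∑ a : A, ∑ b, q (Sum.elim e e' (Sum.inl a)) b *
      Real.log (q (Sum.elim e e' (Sum.inl a)) b /
        ((∑ b', q (Sum.elim e e' (Sum.inl a)) b') * (∑ k, q k b)))) = l * mi p := by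
    have step : ∀ (a : A) (b : B), q (e a) b *
        Real.log (q (e a) b / ((∑ b', q (e a) b') * (∑ k, q k b))) =
        l * (p a b * Real.log (p a b / ((∑ b', p a b') * (∑ a', p a' b)))) := by
      intro a b
      rw [hq1, hrowL a, hcolL b]
      exact lcancel1 l (p a b) _ _
    simp only [Sum.elim_inl, step]
    unfold mi
    simp only [Finset.mul_sum]
  have hR : (∑ a : A', ∑ b, q (Sum.elim e e' (Sum.inr a)) b *
      Real.log (q (Sum.elim e e' (Sum.inr a)) b /
        ((∑ b', q (Sum.elim e e' (Sum.inr a)) b') * (∑ k, q k b)))) = (1 - l) * mi p' := by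
    have step : ∀ (a : A') (b : B), q (e' a) b *
        Real.log (q (e' a) b / ((∑ b', q (e' a) b') * (∑ k, q k b))) =
        (1 - l) * (p' a b * Real.log (p' a b / ((∑ b', p' a b') * (∑ a', p' a' b)))) := by
      intro a b
      rw [hq2, hrowR a, hcolR b]
      exact lcancel1 (1 - l) (p' a b) _ _
    simp only [Sum.elim_inr, step]
    unfold mi
    simp only [Finset.mul_sum]
  rw [hL, hR]
  rfl

lemma mi_mix_le (l : ℝ) (hl0 : 0 < l) (hl1 : l < 1)
    (p : A → B → ℝ) (p' : A' → B → ℝ) (q : K → B → ℝ)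
    (e : A → K) (e' : A' → K) (he : Function.Injective e) (he' : Function.Injective e')
    (hdis : ∀ a a', e a ≠ e' a')
    (hp : ∀ a b, 0 ≤ p a b) (hp' : ∀ a b, 0 ≤ p' a b)
    (hq1 : ∀ a b, q (e a) b = l * p a b) (hq2 : ∀ a b, q (e' a) b = (1 - l) * p' a b)
    (hq0 : ∀ k, (∀ a, e a ≠ k) → (∀ a', e' a' ≠ k) → ∀ b, q k b = 0) :
    l * mi p + (1 - l) * mi p' ≤ mi q := by
  have hGinj : Function.Injective (Sum.elim e e') := Gelim_inj he he' hdis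
  have hq0' : ∀ k, (∀ x : A ⊕ A', Sum.elim e e' x ≠ k) → ∀ b, q k b = 0 :=
    fun k hk b => hq0 k (fun a => hk (Sum.inl a)) (fun a => hk (Sum.inr a)) b
  have hcolq : ∀ b, (∑ k, q k b) = l * (∑ a, p a b) + (1 - l) * (∑ a', p' a' b) := by
    intro b
    rw [sum_inj_zero (Sum.elim e e') hGinj (fun k => q k b) (fun k hk => hq0' k hk b),
      Fintype.sum_sum_type]
    simp only [Sum.elim_inl, Sum.elim_inr, hq1, hq2]
    rw [← Finset.mul_sum, ← Finset.mul_sum]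
  have hrowL : ∀ a, (∑ b', q (e a) b') = l * ∑ b', p a b' := by
    intro a; simp only [hq1]; rw [← Finset.mul_sum]
  have hrowR : ∀ a, (∑ b', q (e' a) b') = (1 - l) * ∑ b', p' a b' := by
    intro a; simp only [hq2]; rw [← Finset.mul_sum]
  have hCp : ∀ b, 0 ≤ ∑ a', p a' b := fun b => Finset.sum_nonneg fun a _ => hp a b
  have hCp' : ∀ b, 0 ≤ ∑ a', p' a' b := fun b => Finset.sum_nonneg fun a _ => hp' a b
  have hcolpos : ∀ b, 0 ≤ ∑ k, q k b := by
    intro b; rw [hcolq b]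
    have := hCp b; have := hCp' b; nlinarith
  have hmq : mi q = l * mi p + (1 - l) * mi p' +
      ∑ b, (l * ((∑ a', p a' b) * Real.log ((∑ a', p a' b) / (∑ k, q k b))) +
        (1 - l) * ((∑ a', p' a' b) * Real.log ((∑ a', p' a' b) / (∑ k, q k b)))) := by
    unfold mi
    rw [sum_inj_zero (Sum.elim e e') hGinj _
        (fun k hk => Finset.sum_eq_zero fun b _ => by rw [hq0' k hk b, zero_mul]),
      Fintype.sum_sum_type]
    have stepL : ∀ (a : A) (b : B), q (e a) b *
        Real.log (q (e a) b / ((∑ b', q (e a) b') * (∑ k, q k b))) =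
        l * (p a b * Real.log (p a b / ((∑ b', p a b') * (∑ a', p a' b)))) +
        l * (p a b * Real.log ((∑ a', p a' b) / (∑ k, q k b))) := by
      intro a b
      rw [hq1, hrowL a, lcancel1,
        term_split (p a b) (∑ b', p a b') (∑ a', p a' b) (∑ k, q k b) (hp a b)
          (Finset.single_le_sum (fun b' _ => hp a b') (Finset.mem_univ b))
          (Finset.single_le_sum (fun a' _ => hp a' b) (Finset.mem_univ a))
          (fun hx => by
            rw [hcolq b]
            have h1 : p a b ≤ ∑ a', p a' b :=
              Finset.single_le_sum (fun a' _ => hp a' b) (Finset.mem_univ a)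
            have := hCp' b
            nlinarith)]
      ring
    have stepR : ∀ (a : A') (b : B), q (e' a) b *
        Real.log (q (e' a) b / ((∑ b', q (e' a) b') * (∑ k, q k b))) =
        (1 - l) * (p' a b * Real.log (p' a b / ((∑ b', p' a b') * (∑ a', p' a' b)))) +
        (1 - l) * (p' a b * Real.log ((∑ a', p' a' b) / (∑ k, q k b))) := by
      intro a b
      rw [hq2, hrowR a, lcancel1,
        term_split (p' a b) (∑ b', p' a b') (∑ a', p' a' b) (∑ k, q k b) (hp' a b)
          (Finset.single_le_sum (fun b' _ => hp' a b') (Finset.mem_univ b))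
          (Finset.single_le_sum (fun a' _ => hp' a' b) (Finset.mem_univ a))
          (fun hx => by
            rw [hcolq b]
            have h1 : p' a b ≤ ∑ a', p' a' b :=
              Finset.single_le_sum (fun a' _ => hp' a' b) (Finset.mem_univ a)
            have := hCp b
            nlinarith)]
      ring
    simp only [Sum.elim_inl, Sum.elim_inr, stepL, stepR, Finset.sum_add_distrib]
    have eL1 : (∑ a : A, ∑ b, l * (p a b *
        Real.log (p a b / ((∑ b', p a b') * (∑ a', p a' b))))) = l * mi p := by
      unfold mi; simp only [Finset.mul_sum]
    have eR1 : (∑ a : A', ∑ b, (1 - l) * (p' a b *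
        Real.log (p' a b / ((∑ b', p' a b') * (∑ a', p' a' b))))) = (1 - l) * mi p' := by
      unfold mi; simp only [Finset.mul_sum]
    have eL2 : (∑ a : A, ∑ b, l * (p a b *
        Real.log ((∑ a', p a' b) / (∑ k, q k b)))) =
        ∑ b, l * ((∑ a', p a' b) * Real.log ((∑ a', p a' b) / (∑ k, q k b))) := by
      rw [Finset.sum_comm]
      refine Finset.sum_congr rfl fun b _ => ?_
      calc (∑ x : A, l * (p x b * Real.log ((∑ a', p a' b) / (∑ k, q k b))))
          = ∑ x : A, p x b * (l * Real.log ((∑ a', p a' b) / (∑ k, q k b))) :=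
            Finset.sum_congr rfl fun a _ => by ring
        _ = (∑ x : A, p x b) * (l * Real.log ((∑ a', p a' b) / (∑ k, q k b))) := by
            rw [Finset.sum_mul]
        _ = l * ((∑ a', p a' b) * Real.log ((∑ a', p a' b) / (∑ k, q k b))) := by ring
    have eR2 : (∑ a : A', ∑ b, (1 - l) * (p' a b *
        Real.log ((∑ a', p' a' b) / (∑ k, q k b)))) =
        ∑ b, (1 - l) * ((∑ a', p' a' b) * Real.log ((∑ a', p' a' b) / (∑ k, q k b))) := by
      rw [Finset.sum_comm]
      refine Finset.sum_congr rfl fun b _ => ?_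
      calc (∑ x : A', (1 - l) * (p' x b * Real.log ((∑ a', p' a' b) / (∑ k, q k b))))
          = ∑ x : A', p' x b * ((1 - l) * Real.log ((∑ a', p' a' b) / (∑ k, q k b))) :=
            Finset.sum_congr rfl fun a _ => by ring
        _ = (∑ x : A', p' x b) * ((1 - l) * Real.log ((∑ a', p' a' b) / (∑ k, q k b))) := by
            rw [Finset.sum_mul]
        _ = (1 - l) * ((∑ a', p' a' b) * Real.log ((∑ a', p' a' b) / (∑ k, q k b))) := by ring
    rw [eL2, eR2]
    simp only [Finset.mul_sum, Finset.sum_add_distrib]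
    ring
  rw [hmq]
  have hextra : 0 ≤ ∑ b, (l * ((∑ a', p a' b) * Real.log ((∑ a', p a' b) / (∑ k, q k b))) +
      (1 - l) * ((∑ a', p' a' b) * Real.log ((∑ a', p' a' b) / (∑ k, q k b)))) := by
    refine Finset.sum_nonneg fun b _ => ?_
    have h1 : (∑ a', p a' b) - (∑ k, q k b) ≤
        (∑ a', p a' b) * Real.log ((∑ a', p a' b) / (∑ k, q k b)) :=
      mul_log_div_ge _ _ (hCp b) (hcolpos b)
        (fun hx => by rw [hcolq b]; have := hCp' b; nlinarith)
    have h2 : (∑ a', p' a' b) - (∑ k, q k b) ≤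
        (∑ a', p' a' b) * Real.log ((∑ a', p' a' b) / (∑ k, q k b)) :=
      mul_log_div_ge _ _ (hCp' b) (hcolpos b)
        (fun hx => by rw [hcolq b]; have := hCp b; nlinarith)
    have h1' := mul_le_mul_of_nonneg_left h1 hl0.le
    have h2' := mul_le_mul_of_nonneg_left h2 (by linarith : (0:ℝ) ≤ 1 - l)
    nlinarith [hcolq b]
  linarith

end coreMix


section MixConstruction

variable {ch : DMMAC S X1 X2 Y}

/-- Time-sharing weight for the first component. -/
def mixW0 (d d' : AuxP ch) (l : ℝ) (x2 : X2) : ℝ :=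
  if l * d.pX2 x2 + (1 - l) * d'.pX2 x2 = 0 then l
  else l * d.pX2 x2 / (l * d.pX2 x2 + (1 - l) * d'.pX2 x2)

/-- Time-sharing weight for the second component. -/
def mixW1 (d d' : AuxP ch) (l : ℝ) (x2 : X2) : ℝ :=
  if l * d.pX2 x2 + (1 - l) * d'.pX2 x2 = 0 then 1 - l
  else (1 - l) * d'.pX2 x2 / (l * d.pX2 x2 + (1 - l) * d'.pX2 x2)

lemma mixW0_nonneg (d d' : AuxP ch) (l : ℝ) (hl0 : 0 ≤ l) (hl1 : l ≤ 1) (x2 : X2) :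
    0 ≤ mixW0 d d' l x2 := by
  unfold mixW0
  split
  · exact hl0
  · have h1 : 0 ≤ l * d.pX2 x2 := mul_nonneg hl0 (d.pX2_nonneg x2)
    have h2 : 0 ≤ (1 - l) * d'.pX2 x2 := mul_nonneg (by linarith) (d'.pX2_nonneg x2)
    exact div_nonneg h1 (by linarith)

lemma mixW1_nonneg (d d' : AuxP ch) (l : ℝ) (hl0 : 0 ≤ l) (hl1 : l ≤ 1) (x2 : X2) :
    0 ≤ mixW1 d d' l x2 := by
  unfold mixW1
  split
  · linarith
  · have h1 : 0 ≤ l * d.pX2 x2 := mul_nonneg hl0 (d.pX2_nonneg x2)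
    have h2 : 0 ≤ (1 - l) * d'.pX2 x2 := mul_nonneg (by linarith) (d'.pX2_nonneg x2)
    exact div_nonneg h2 (by linarith)

lemma mixW0_mul (d d' : AuxP ch) (l : ℝ) (hl0 : 0 ≤ l) (hl1 : l ≤ 1) (x2 : X2) :
    (l * d.pX2 x2 + (1 - l) * d'.pX2 x2) * mixW0 d d' l x2 = l * d.pX2 x2 := by
  unfold mixW0
  split
  · rename_i h
    have h1 : 0 ≤ l * d.pX2 x2 := mul_nonneg hl0 (d.pX2_nonneg x2)
    have h2 : 0 ≤ (1 - l) * d'.pX2 x2 := mul_nonneg (by linarith) (d'.pX2_nonneg x2)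
    have : l * d.pX2 x2 = 0 := by linarith
    rw [h, this, zero_mul]
  · rename_i h
    rw [mul_div_assoc', mul_comm, mul_div_assoc, div_self h, mul_one]

lemma mixW1_mul (d d' : AuxP ch) (l : ℝ) (hl0 : 0 ≤ l) (hl1 : l ≤ 1) (x2 : X2) :
    (l * d.pX2 x2 + (1 - l) * d'.pX2 x2) * mixW1 d d' l x2 = (1 - l) * d'.pX2 x2 := by
  unfold mixW1
  split
  · rename_i h
    have h1 : 0 ≤ l * d.pX2 x2 := mul_nonneg hl0 (d.pX2_nonneg x2)
    have h2 : 0 ≤ (1 - l) * d'.pX2 x2 := mul_nonneg (by linarith) (d'.pX2_nonneg x2)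
    have : (1 - l) * d'.pX2 x2 = 0 := by linarith
    rw [h, this, zero_mul]
  · rename_i h
    rw [mul_div_assoc', mul_comm, mul_div_assoc, div_self h, mul_one]

lemma mixW_sum (d d' : AuxP ch) (l : ℝ) (x2 : X2) :
    mixW0 d d' l x2 + mixW1 d d' l x2 = 1 := by
  unfold mixW0 mixW1
  split
  · ring
  · rename_i h
    rw [← add_div, div_self h]

/-- The time-sharing element of 𝒫 used to prove convexity of 𝒞. -/
def mixAux (d d' : AuxP ch) (l : ℝ) (hl0 : 0 ≤ l) (hl1 : l ≤ 1) : AuxP ch where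
  U := d.U ⊕ d'.U
  V := d.V ⊕ d'.V
  fU := inferInstance
  fV := inferInstance
  pX2 := fun x2 => l * d.pX2 x2 + (1 - l) * d'.pX2 x2
  pV := fun s x2 vv =>
    Sum.elim (fun v => mixW0 d d' l x2 * d.pV s x2 v)
      (fun v => mixW1 d d' l x2 * d'.pV s x2 v) vv
  pUX1 := fun s vv x2 uu x1 =>
    Sum.elim (fun v => Sum.elim (fun u => d.pUX1 s v x2 u x1) (fun _ => 0) uu)
      (fun v => Sum.elim (fun _ => 0) (fun u => d'.pUX1 s v x2 u x1) uu) vv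
  pX2_nonneg := fun x2 => add_nonneg (mul_nonneg hl0 (d.pX2_nonneg x2))
    (mul_nonneg (by linarith) (d'.pX2_nonneg x2))
  pX2_sum := by
    rw [Finset.sum_add_distrib, ← Finset.mul_sum, ← Finset.mul_sum, d.pX2_sum, d'.pX2_sum]
    ring
  pV_nonneg := by
    intro s x2 vv
    cases vv with
    | inl v => exact mul_nonneg (mixW0_nonneg d d' l hl0 hl1 x2) (d.pV_nonneg s x2 v)
    | inr v => exact mul_nonneg (mixW1_nonneg d d' l hl0 hl1 x2) (d'.pV_nonneg s x2 v)
  pV_sum := by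
    intro s x2
    rw [Fintype.sum_sum_type]
    simp only [Sum.elim_inl, Sum.elim_inr]
    rw [← Finset.mul_sum, ← Finset.mul_sum, d.pV_sum s x2, d'.pV_sum s x2, mul_one, mul_one]
    exact mixW_sum d d' l x2
  pUX1_nonneg := by
    intro s vv x2 uu x1
    cases vv with
    | inl v =>
      cases uu with
      | inl u => exact d.pUX1_nonneg s v x2 u x1
      | inr u => exact le_refl 0
    | inr v =>
      cases uu with
      | inl u => exact le_refl 0
      | inr u => exact d'.pUX1_nonneg s v x2 u x1
  pUX1_sum := by
    intro s vv x2
    cases vv with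
    | inl v =>
      rw [Fintype.sum_sum_type]
      simp only [Sum.elim_inl, Sum.elim_inr, Finset.sum_const_zero, add_zero]
      exact d.pUX1_sum s v x2
    | inr v =>
      rw [Fintype.sum_sum_type]
      simp only [Sum.elim_inl, Sum.elim_inr, Finset.sum_const_zero, zero_add]
      exact d'.pUX1_sum s v x2

lemma mix_joint_ll (d d' : AuxP ch) (l : ℝ) (hl0 : 0 ≤ l) (hl1 : l ≤ 1)
    (s : S) (u : d.U) (v : d.V) (x1 : X1) (x2 : X2) (y : Y) :
    (mixAux d d' l hl0 hl1).joint s (Sum.inl u) (Sum.inl v) x1 x2 y =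
      l * d.joint s u v x1 x2 y := by
  have h := mixW0_mul d d' l hl0 hl1 x2
  simp only [AuxP.joint, mixAux, Sum.elim_inl]
  linear_combination (ch.Q s * d.pV s x2 v * d.pUX1 s v x2 u x1 * ch.W x1 x2 s y) * h

lemma mix_joint_rr (d d' : AuxP ch) (l : ℝ) (hl0 : 0 ≤ l) (hl1 : l ≤ 1)
    (s : S) (u : d'.U) (v : d'.V) (x1 : X1) (x2 : X2) (y : Y) :
    (mixAux d d' l hl0 hl1).joint s (Sum.inr u) (Sum.inr v) x1 x2 y =
      (1 - l) * d'.joint s u v x1 x2 y := by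
  have h := mixW1_mul d d' l hl0 hl1 x2
  simp only [AuxP.joint, mixAux, Sum.elim_inl, Sum.elim_inr]
  linear_combination (ch.Q s * d'.pV s x2 v * d'.pUX1 s v x2 u x1 * ch.W x1 x2 s y) * h

lemma mix_joint_lr (d d' : AuxP ch) (l : ℝ) (hl0 : 0 ≤ l) (hl1 : l ≤ 1)
    (s : S) (u : d.U) (v : d'.V) (x1 : X1) (x2 : X2) (y : Y) :
    (mixAux d d' l hl0 hl1).joint s (Sum.inl u) (Sum.inr v) x1 x2 y = 0 := by
  simp [AuxP.joint, mixAux]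

lemma mix_joint_rl (d d' : AuxP ch) (l : ℝ) (hl0 : 0 ≤ l) (hl1 : l ≤ 1)
    (s : S) (u : d'.U) (v : d.V) (x1 : X1) (x2 : X2) (y : Y) :
    (mixAux d d' l hl0 hl1).joint s (Sum.inr u) (Sum.inl v) x1 x2 y = 0 := by
  simp [AuxP.joint, mixAux]

lemma AuxP.joint_nonneg (d : AuxP ch) (s : S) (u : d.U) (v : d.V) (x1 : X1) (x2 : X2) (y : Y) :
    0 ≤ d.joint s u v x1 x2 y :=
  mul_nonneg (mul_nonneg (mul_nonneg (mul_nonneg (ch.Q_nonneg s) (d.pX2_nonneg x2))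
    (d.pV_nonneg s x2 v)) (d.pUX1_nonneg s v x2 u x1)) (ch.W_nonneg x1 x2 s y)

lemma AuxP.marg_S (d : AuxP ch) (s : S) :
    (∑ a : d.U × d.V × X2, ∑ x1, ∑ y, d.joint s a.1 a.2.1 x1 a.2.2 y) = ch.Q s := by
  simp only [Fintype.sum_prod_type]
  have hy : ∀ (u : d.U) (v : d.V) (x2 : X2) (x1 : X1), (∑ y, d.joint s u v x1 x2 y) =
      ch.Q s * d.pX2 x2 * d.pV s x2 v * d.pUX1 s v x2 u x1 := by
    intro u v x2 x1
    unfold AuxP.joint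
    rw [← Finset.mul_sum, ch.W_sum, mul_one]
  have hux : ∀ (v : d.V) (x2 : X2),
      (∑ u, ∑ x1, ch.Q s * d.pX2 x2 * d.pV s x2 v * d.pUX1 s v x2 u x1) =
      ch.Q s * d.pX2 x2 * d.pV s x2 v := by
    intro v x2
    simp only [← Finset.mul_sum]
    rw [d.pUX1_sum s v x2, mul_one]
  calc (∑ u, ∑ v, ∑ x2, ∑ x1, ∑ y, d.joint s u v x1 x2 y)
      = ∑ u, ∑ v, ∑ x2, ∑ x1, ch.Q s * d.pX2 x2 * d.pV s x2 v * d.pUX1 s v x2 u x1 := by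
        simp only [hy]
    _ = ∑ v, ∑ u, ∑ x2, ∑ x1, ch.Q s * d.pX2 x2 * d.pV s x2 v * d.pUX1 s v x2 u x1 :=
        Finset.sum_comm
    _ = ∑ v, ∑ x2, ∑ u, ∑ x1, ch.Q s * d.pX2 x2 * d.pV s x2 v * d.pUX1 s v x2 u x1 :=
        Finset.sum_congr rfl fun v _ => Finset.sum_comm
    _ = ∑ x2, ∑ v, ∑ u, ∑ x1, ch.Q s * d.pX2 x2 * d.pV s x2 v * d.pUX1 s v x2 u x1 :=
        Finset.sum_comm
    _ = ∑ x2, ∑ v, ch.Q s * d.pX2 x2 * d.pV s x2 v :=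
        Finset.sum_congr rfl fun x2 _ => Finset.sum_congr rfl fun v _ => hux v x2
    _ = ∑ x2, ch.Q s * d.pX2 x2 := by
        refine Finset.sum_congr rfl fun x2 _ => ?_
        rw [← Finset.mul_sum, d.pV_sum s x2, mul_one]
    _ = ch.Q s := by rw [← Finset.mul_sum, d.pX2_sum, mul_one]

lemma mix_iUY (d d' : AuxP ch) (l : ℝ) (hl0 : 0 ≤ l) (hl1 : l ≤ 1) :
    (mixAux d d' l hl0 hl1).iUY_VX2 = l * d.iUY_VX2 + (1 - l) * d'.iUY_VX2 := by
  unfold AuxP.iUY_VX2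
  refine cmi_mix l _ _ _
    (fun c : d.V × X2 => ((Sum.inl c.1 : d.V ⊕ d'.V), c.2))
    (fun c : d'.V × X2 => ((Sum.inr c.1 : d.V ⊕ d'.V), c.2)) ?_ ?_ ?_ ?_ ?_ ?_ ?_
  · intro c c' hc
    dsimp only at hc
    erw [Prod.mk.injEq, Sum.inl.injEq] at hc
    exact Prod.ext hc.1 hc.2
  · intro c c' hc
    dsimp only at hc
    erw [Prod.mk.injEq, Sum.inr.injEq] at hc
    exact Prod.ext hc.1 hc.2
  · intro c c' hc
    erw [Prod.mk.injEq] at hc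
    exact Sum.inl_ne_inr hc.1
  · intro a b c
    simp only [mix_joint_ll, ← Finset.mul_sum]
  · intro a b c
    simp only [mix_joint_rr, ← Finset.mul_sum]
  · intro a b k hk
    obtain ⟨vv, x2⟩ := k
    cases vv with
    | inl v => exact absurd rfl (hk (v, x2))
    | inr v => simp only [mix_joint_lr, Finset.sum_const_zero]
  · intro a b k hk
    obtain ⟨vv, x2⟩ := k
    cases vv with
    | inl v => simp only [mix_joint_rl, Finset.sum_const_zero]
    | inr v => exact absurd rfl (hk (v, x2))

lemma mix_iUS (d d' : AuxP ch) (l : ℝ) (hl0 : 0 ≤ l) (hl1 : l ≤ 1) :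
    (mixAux d d' l hl0 hl1).iUS_VX2 = l * d.iUS_VX2 + (1 - l) * d'.iUS_VX2 := by
  unfold AuxP.iUS_VX2
  refine cmi_mix l _ _ _
    (fun c : d.V × X2 => ((Sum.inl c.1 : d.V ⊕ d'.V), c.2))
    (fun c : d'.V × X2 => ((Sum.inr c.1 : d.V ⊕ d'.V), c.2)) ?_ ?_ ?_ ?_ ?_ ?_ ?_
  · intro c c' hc
    dsimp only at hc
    erw [Prod.mk.injEq, Sum.inl.injEq] at hc
    exact Prod.ext hc.1 hc.2
  · intro c c' hc
    dsimp only at hc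
    erw [Prod.mk.injEq, Sum.inr.injEq] at hc
    exact Prod.ext hc.1 hc.2
  · intro c c' hc
    erw [Prod.mk.injEq] at hc
    exact Sum.inl_ne_inr hc.1
  · intro a b c
    simp only [mix_joint_ll, ← Finset.mul_sum]
  · intro a b c
    simp only [mix_joint_rr, ← Finset.mul_sum]
  · intro a b k hk
    obtain ⟨vv, x2⟩ := k
    cases vv with
    | inl v => exact absurd rfl (hk (v, x2))
    | inr v => simp only [mix_joint_lr, Finset.sum_const_zero]
  · intro a b k hk
    obtain ⟨vv, x2⟩ := k
    cases vv with
    | inl v => simp only [mix_joint_rl, Finset.sum_const_zero]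
    | inr v => exact absurd rfl (hk (v, x2))

lemma mix_iUVX2S (d d' : AuxP ch) (l : ℝ) (hl0 : 0 ≤ l) (hl1 : l ≤ 1) :
    (mixAux d d' l hl0 hl1).iUVX2S = l * d.iUVX2S + (1 - l) * d'.iUVX2S := by
  unfold AuxP.iUVX2S
  refine mi_mix_eq l _ _ _
    (fun a : d.U × d.V × X2 => ((Sum.inl a.1 : d.U ⊕ d'.U), (Sum.inl a.2.1 : d.V ⊕ d'.V), a.2.2))
    (fun a : d'.U × d'.V × X2 => ((Sum.inr a.1 : d.U ⊕ d'.U), (Sum.inr a.2.1 : d.V ⊕ d'.V), a.2.2))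
    ?_ ?_ ?_ ?_ ?_ ?_ ?_
  · intro a b hab
    dsimp only at hab
    erw [Prod.mk.injEq, Prod.mk.injEq, Sum.inl.injEq, Sum.inl.injEq] at hab
    exact Prod.ext hab.1 (Prod.ext hab.2.1 hab.2.2)
  · intro a b hab
    dsimp only at hab
    erw [Prod.mk.injEq, Prod.mk.injEq, Sum.inr.injEq, Sum.inr.injEq] at hab
    exact Prod.ext hab.1 (Prod.ext hab.2.1 hab.2.2)
  · intro a a' hc
    erw [Prod.mk.injEq] at hc
    exact Sum.inl_ne_inr hc.1
  · intro a b
    simp only [mix_joint_ll, ← Finset.mul_sum]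
  · intro a b
    simp only [mix_joint_rr, ← Finset.mul_sum]
  · intro k h1 h2 b
    obtain ⟨uu, vv, x2⟩ := k
    cases uu with
    | inl u =>
      cases vv with
      | inl v => exact absurd rfl (h1 (u, v, x2))
      | inr v => simp only [mix_joint_lr, Finset.sum_const_zero]
    | inr u =>
      cases vv with
      | inl v => simp only [mix_joint_rl, Finset.sum_const_zero]
      | inr v => exact absurd rfl (h2 (u, v, x2))
  · intro b
    rw [AuxP.marg_S d b, AuxP.marg_S d' b]

lemma mix_iUVX2Y (d d' : AuxP ch) (l : ℝ) (hl0 : 0 < l) (hl1 : l < 1) :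
    l * d.iUVX2Y + (1 - l) * d'.iUVX2Y ≤ (mixAux d d' l hl0.le hl1.le).iUVX2Y := by
  unfold AuxP.iUVX2Y
  refine mi_mix_le l hl0 hl1 _ _ _
    (fun a : d.U × d.V × X2 => ((Sum.inl a.1 : d.U ⊕ d'.U), (Sum.inl a.2.1 : d.V ⊕ d'.V), a.2.2))
    (fun a : d'.U × d'.V × X2 => ((Sum.inr a.1 : d.U ⊕ d'.U), (Sum.inr a.2.1 : d.V ⊕ d'.V), a.2.2))
    ?_ ?_ ?_ ?_ ?_ ?_ ?_ ?_
  · intro a b hab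
    dsimp only at hab
    erw [Prod.mk.injEq, Prod.mk.injEq, Sum.inl.injEq, Sum.inl.injEq] at hab
    exact Prod.ext hab.1 (Prod.ext hab.2.1 hab.2.2)
  · intro a b hab
    dsimp only at hab
    erw [Prod.mk.injEq, Prod.mk.injEq, Sum.inr.injEq, Sum.inr.injEq] at hab
    exact Prod.ext hab.1 (Prod.ext hab.2.1 hab.2.2)
  · intro a a' hc
    erw [Prod.mk.injEq] at hc
    exact Sum.inl_ne_inr hc.1
  · intro a b
    exact Finset.sum_nonneg fun s _ => Finset.sum_nonneg fun x1 _ =>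
      d.joint_nonneg s a.1 a.2.1 x1 a.2.2 b
  · intro a b
    exact Finset.sum_nonneg fun s _ => Finset.sum_nonneg fun x1 _ =>
      d'.joint_nonneg s a.1 a.2.1 x1 a.2.2 b
  · intro a b
    simp only [mix_joint_ll, ← Finset.mul_sum]
  · intro a b
    simp only [mix_joint_rr, ← Finset.mul_sum]
  · intro k h1 h2 b
    obtain ⟨uu, vv, x2⟩ := k
    cases uu with
    | inl u =>
      cases vv with
      | inl v => exact absurd rfl (h1 (u, v, x2))
      | inr v => simp only [mix_joint_lr, Finset.sum_const_zero]
    | inr u =>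
      cases vv with
      | inl v => simp only [mix_joint_rl, Finset.sum_const_zero]
      | inr v => exact absurd rfl (h2 (u, v, x2))

end MixConstruction

/-- Proposition 1, part 1: the set 𝒞 is convex. -/
theorem regionC_convex {S X1 X2 Y : Type} [Fintype S] [Fintype X1] [Fintype X2] [Fintype Y]
    (ch : DMMAC S X1 X2 Y) (Rc R1 Rc' R1' : ℝ)
    (h : (Rc, R1) ∈ regionC ch) (h' : (Rc', R1') ∈ regionC ch)
    (l : ℝ) (hl0 : 0 ≤ l) (hl1 : l ≤ 1) :
    (l * Rc + (1 - l) * Rc', l * R1 + (1 - l) * R1') ∈ regionC ch := by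
  obtain ⟨hc0, h10, d, hd1, hd2⟩ := h
  obtain ⟨hc0', h10', d', hd1', hd2'⟩ := h'
  rcases eq_or_lt_of_le hl0 with h0 | h0
  · have : l = 0 := h0.symm
    subst this
    simpa using ⟨hc0', h10', d', hd1', hd2'⟩
  rcases eq_or_lt_of_le hl1 with h1 | h1
  · subst h1
    simpa using ⟨hc0, h10, d, hd1, hd2⟩
  refine ⟨add_nonneg (mul_nonneg hl0 hc0) (mul_nonneg (by linarith) hc0'),
    add_nonneg (mul_nonneg hl0 h10) (mul_nonneg (by linarith) h10'),
    mixAux d d' l hl0 hl1, ?_, ?_⟩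
  · rw [mix_iUY d d' l hl0 hl1, mix_iUS d d' l hl0 hl1]
    have hA := mul_le_mul_of_nonneg_left hd1 hl0
    have hB := mul_le_mul_of_nonneg_left hd1' (by linarith : (0:ℝ) ≤ 1 - l)
    simp only [Prod.snd] at *
    nlinarith
  · have hY := mix_iUVX2Y d d' l h0 h1
    rw [mix_iUVX2S d d' l hl0 hl1]
    have hA := mul_le_mul_of_nonneg_left hd2 hl0
    have hB := mul_le_mul_of_nonneg_left hd2' (by linarith : (0:ℝ) ≤ 1 - l)
    simp only [Prod.fst, Prod.snd] at *
    nlinarith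

end
end

section
/- (Rate region of the Wyner-Ziv-type scheme of Theorem 2 equals C.) For every (S,U,V,X₁,X₂,Y) ∈ 𝒫, the set of pairs (Rc,R1) with Rc ≥ 0, R1 ≥ 0 for which there exist real numbers R0 and R̂ with 0 ≤ R0 ≤ I(X₂;Y), R̂ ≥ I(V;S|X₂), R1 ≤ I(U;Y|V,X₂) − I(U;S|V,X₂), (R̂ − R0) + R1 ≤ I(U,V;Y|X₂) − I(U;S|V,X₂), and Rc + R1 + R̂ ≤ I(U,V,X₂;Y) − I(U;S|V,X₂), equals the set of pairs (Rc,R1) with Rc ≥ 0, R1 ≥ 0 satisfying R1 ≤ I(U;Y|V,X₂) − I(U;S|V,X₂) and Rc + R1 ≤ I(U,V,X₂;Y) − I(U,V,X₂;S). In particular, the union of the former regions over 𝒫 equals C. -/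
open scoped BigOperators

noncomputable section

variable {S X1 X2 Y : Type} [Fintype S] [Fintype X1] [Fintype X2] [Fintype Y]

section FMEAux

lemma mi_nonneg {A B : Type} [Fintype A] [Fintype B] (p : A → B → ℝ)
    (hp : ∀ a b, 0 ≤ p a b) (hsum : ∑ a, ∑ b, p a b = 1) : 0 ≤ mi p := by
  have key : ∀ a b, p a b - (∑ b', p a b') * (∑ a', p a' b)
      ≤ p a b * Real.log (p a b / ((∑ b', p a b') * (∑ a', p a' b))) := by
    intro a b
    set m := (∑ b', p a b') * (∑ a', p a' b) with hm
    have hmnn : 0 ≤ m := mul_nonneg (Finset.sum_nonneg fun _ _ => hp _ _)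
      (Finset.sum_nonneg fun _ _ => hp _ _)
    rcases eq_or_lt_of_le (hp a b) with h0 | hpos
    · rw [← h0]; simpa using hmnn
    · have hb : p a b ≤ ∑ b', p a b' := Finset.single_le_sum (f := fun b' => p a b')
        (fun i _ => hp a i) (Finset.mem_univ b)
      have ha : p a b ≤ ∑ a', p a' b := Finset.single_le_sum (f := fun a' => p a' b)
        (fun i _ => hp i b) (Finset.mem_univ a)
      have hmpos : 0 < m := mul_pos (lt_of_lt_of_le hpos hb) (lt_of_lt_of_le hpos ha)
      have hlog : Real.log (m / p a b) ≤ m / p a b - 1 :=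
        Real.log_le_sub_one_of_pos (div_pos hmpos hpos)
      have hinv : Real.log (p a b / m) = - Real.log (m / p a b) := by
        rw [← Real.log_inv]; congr 1; field_simp
      have h1 : 1 - m / p a b ≤ Real.log (p a b / m) := by rw [hinv]; linarith
      have h2 := mul_le_mul_of_nonneg_left h1 (le_of_lt hpos)
      have h3 : p a b * (1 - m / p a b) = p a b - m := by field_simp
      linarith
  have hmsum : ∑ a, ∑ b, (∑ b', p a b') * (∑ a', p a' b) = 1 := by
    have hT : ∑ b, ∑ a', p a' b = 1 := by rw [Finset.sum_comm]; exact hsum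
    calc ∑ a, ∑ b, (∑ b', p a b') * (∑ a', p a' b)
        = ∑ a, (∑ b', p a b') * (∑ b, ∑ a', p a' b) := by
          simp [Finset.mul_sum]
      _ = ∑ a, (∑ b', p a b') := by simp only [hT, mul_one]
      _ = 1 := hsum
  have hge : ∑ a, ∑ b, (p a b - (∑ b', p a b') * (∑ a', p a' b)) ≤ mi p :=
    Finset.sum_le_sum fun a _ => Finset.sum_le_sum fun b _ => key a b
  have hz : ∑ a, ∑ b, (p a b - (∑ b', p a b') * (∑ a', p a' b)) = 0 := by
    simp only [Finset.sum_sub_distrib, hsum, hmsum]; ring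
  linarith

lemma mi_chain {A B C : Type} [Fintype A] [Fintype B] [Fintype C] (p : A → B → C → ℝ)
    (hp : ∀ a b c, 0 ≤ p a b c) :
    mi (fun (ac : A × C) (b : B) => p ac.1 b ac.2)
      = mi (fun (c : C) (b : B) => ∑ a, p a b c) + cmi p := by
  unfold mi cmi
  simp only [Fintype.sum_prod_type]
  set L1 : A → B → C → ℝ := fun a b c =>
    Real.log (p a b c / ((∑ b', p a b' c) * (∑ a', ∑ c', p a' b c'))) with hL1
  set L2 : B → C → ℝ := fun b c =>
    Real.log ((∑ a, p a b c) / ((∑ b', ∑ a, p a b' c) * (∑ c', ∑ a, p a b c'))) with hL2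
  set L3 : A → B → C → ℝ := fun a b c =>
    Real.log ((∑ a', ∑ b', p a' b' c) * p a b c / ((∑ b', p a b' c) * (∑ a', p a' b c))) with hL3
  have key : ∀ a b c, p a b c * L1 a b c = p a b c * L2 b c + p a b c * L3 a b c := by
    intro a b c
    rcases eq_or_lt_of_le (hp a b c) with h0 | hpos
    · rw [← h0]; ring
    · have hRB : 0 < ∑ b', p a b' c :=
        lt_of_lt_of_le hpos (Finset.single_le_sum (f := fun b' => p a b' c)
          (fun i _ => hp a i c) (Finset.mem_univ b))
      have hQA : 0 < ∑ a', p a' b c :=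
        lt_of_lt_of_le hpos (Finset.single_le_sum (f := fun a' => p a' b c)
          (fun i _ => hp i b c) (Finset.mem_univ a))
      have hQC : 0 < ∑ c', p a b c' :=
        lt_of_lt_of_le hpos (Finset.single_le_sum (f := fun c' => p a b c')
          (fun i _ => hp a b i) (Finset.mem_univ c))
      have hT : 0 < ∑ a', ∑ c', p a' b c' :=
        lt_of_lt_of_le hQC (Finset.single_le_sum (f := fun a' => ∑ c', p a' b c')
          (fun i _ => Finset.sum_nonneg fun j _ => hp i b j) (Finset.mem_univ a))
      have hM : 0 < ∑ a', ∑ b', p a' b' c :=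
        lt_of_lt_of_le hRB (Finset.single_le_sum (f := fun a' => ∑ b', p a' b' c)
          (fun i _ => Finset.sum_nonneg fun j _ => hp i j c) (Finset.mem_univ a))
      have e1 : (∑ b', ∑ a, p a b' c) = ∑ a', ∑ b', p a' b' c := Finset.sum_comm
      have e2 : (∑ c', ∑ a, p a b c') = ∑ a', ∑ c', p a' b c' := Finset.sum_comm
      have harg2 : 0 < (∑ a, p a b c) / ((∑ b', ∑ a, p a b' c) * (∑ c', ∑ a, p a b c')) := by
        rw [e1, e2]; exact div_pos hQA (mul_pos hM hT)
      have harg3 : 0 < (∑ a', ∑ b', p a' b' c) * p a b c /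
          ((∑ b', p a b' c) * (∑ a', p a' b c)) :=
        div_pos (mul_pos hM hpos) (mul_pos hRB hQA)
      have hprod : ((∑ a, p a b c) / ((∑ b', ∑ a, p a b' c) * (∑ c', ∑ a, p a b c'))) *
          ((∑ a', ∑ b', p a' b' c) * p a b c / ((∑ b', p a b' c) * (∑ a', p a' b c)))
          = p a b c / ((∑ b', p a b' c) * (∑ a', ∑ c', p a' b c')) := by
        rw [e1, e2]
        field_simp
      have hsumlog : L2 b c + L3 a b c = L1 a b c := by
        rw [hL1, hL2, hL3, ← Real.log_mul (ne_of_gt harg2) (ne_of_gt harg3), hprod]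
      rw [← hsumlog]; ring
  have h2 : (∑ c, ∑ b, (∑ a, p a b c) * L2 b c) = ∑ a, ∑ c, ∑ b, p a b c * L2 b c := by
    calc ∑ c, ∑ b, (∑ a, p a b c) * L2 b c
        = ∑ c, ∑ b, ∑ a, p a b c * L2 b c := by
          refine Finset.sum_congr rfl fun c _ => Finset.sum_congr rfl fun b _ => ?_
          rw [Finset.sum_mul]
      _ = ∑ c, ∑ a, ∑ b, p a b c * L2 b c :=
          Finset.sum_congr rfl fun c _ => Finset.sum_comm
      _ = ∑ a, ∑ c, ∑ b, p a b c * L2 b c := Finset.sum_comm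
  have h3 : (∑ a, ∑ b, ∑ c, p a b c * L3 a b c) = ∑ a, ∑ c, ∑ b, p a b c * L3 a b c :=
    Finset.sum_congr rfl fun a _ => Finset.sum_comm
  calc ∑ a, ∑ c, ∑ b, p a b c * L1 a b c
      = ∑ a, ∑ c, ∑ b, (p a b c * L2 b c + p a b c * L3 a b c) := by
        refine Finset.sum_congr rfl fun a _ => Finset.sum_congr rfl fun c _ =>
          Finset.sum_congr rfl fun b _ => key a b c
    _ = (∑ a, ∑ c, ∑ b, p a b c * L2 b c) + ∑ a, ∑ c, ∑ b, p a b c * L3 a b c := by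
        simp [Finset.sum_add_distrib]
    _ = (∑ c, ∑ b, (∑ a, p a b c) * L2 b c) + ∑ a, ∑ b, ∑ c, p a b c * L3 a b c := by
        rw [h2, h3]

lemma mi_reindex {A A' B : Type} [Fintype A] [Fintype A'] [Fintype B] (e : A ≃ A')
    (p : A' → B → ℝ) : mi (fun a b => p (e a) b) = mi p := by
  unfold mi
  have h1 : ∀ b, (∑ a', p (e a') b) = ∑ a', p a' b := fun b =>
    Equiv.sum_comp e fun a' => p a' b
  simp only [h1]
  exact Fintype.sum_equiv e _ _ fun a => rfl

namespace AuxP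

variable {ch : DMMAC S X1 X2 Y} (d : AuxP ch)

lemma joint_nonneg_s8 : ∀ s u v x1 x2 y, 0 ≤ d.joint s u v x1 x2 y := fun s u v x1 x2 y =>
  mul_nonneg (mul_nonneg (mul_nonneg (mul_nonneg (ch.Q_nonneg s) (d.pX2_nonneg x2))
    (d.pV_nonneg s x2 v)) (d.pUX1_nonneg s v x2 u x1)) (ch.W_nonneg x1 x2 s y)

lemma marg_X2S (s : S) (x2 : X2) :
    (∑ v, ∑ u, ∑ x1, ∑ y, d.joint s u v x1 x2 y) = ch.Q s * d.pX2 x2 := by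
  simp only [AuxP.joint, ← Finset.mul_sum, ch.W_sum, mul_one, d.pUX1_sum, d.pV_sum]

lemma mi_X2S_zero :
    mi (fun (x2 : X2) (s : S) => ∑ v, ∑ u, ∑ x1, ∑ y, d.joint s u v x1 x2 y) = 0 := by
  unfold mi
  simp only [d.marg_X2S]
  have h1 : ∀ x2 : X2, ∑ s', ch.Q s' * d.pX2 x2 = d.pX2 x2 := by
    intro x2; rw [← Finset.sum_mul, ch.Q_sum, one_mul]
  have h2 : ∀ s : S, ∑ x2', ch.Q s * d.pX2 x2' = ch.Q s := by
    intro s; rw [← Finset.mul_sum, d.pX2_sum, mul_one]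
  simp only [h1, h2]
  refine Finset.sum_eq_zero fun x2 _ => Finset.sum_eq_zero fun s _ => ?_
  rcases eq_or_ne (ch.Q s * d.pX2 x2) 0 with h | h
  · rw [h, zero_mul]
  · have : ch.Q s * d.pX2 x2 / (d.pX2 x2 * ch.Q s) = 1 := by
      rw [mul_comm (d.pX2 x2)]; exact div_self h
    rw [this, Real.log_one, mul_zero]

lemma chainS : d.iUVX2S = d.iVS_X2 + d.iUS_VX2 := by
  have e1 : d.iUVX2S
      = mi (fun (c : d.V × X2) (s : S) => ∑ u, ∑ x1, ∑ y, d.joint s u c.1 x1 c.2 y)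
        + d.iUS_VX2 :=
    mi_chain (A := d.U) (B := S) (C := d.V × X2)
      (fun u s c => ∑ x1, ∑ y, d.joint s u c.1 x1 c.2 y)
      (fun u s c => Finset.sum_nonneg fun x1 _ => Finset.sum_nonneg fun y _ =>
        d.joint_nonneg_s8 s u c.1 x1 c.2 y)
  have e2 : mi (fun (c : d.V × X2) (s : S) => ∑ u, ∑ x1, ∑ y, d.joint s u c.1 x1 c.2 y)
      = mi (fun (x2 : X2) (s : S) => ∑ v, ∑ u, ∑ x1, ∑ y, d.joint s u v x1 x2 y)
        + d.iVS_X2 :=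
    mi_chain (A := d.V) (B := S) (C := X2)
      (fun v s x2 => ∑ u, ∑ x1, ∑ y, d.joint s u v x1 x2 y)
      (fun v s x2 => Finset.sum_nonneg fun u _ => Finset.sum_nonneg fun x1 _ =>
        Finset.sum_nonneg fun y _ => d.joint_nonneg_s8 s u v x1 x2 y)
  have e3 := d.mi_X2S_zero
  linarith

lemma chainY : d.iUVX2Y = d.iX2Y + d.iUVY_X2 := by
  have hre := mi_reindex (Equiv.prodAssoc d.U d.V X2)
      (fun (a : d.U × d.V × X2) (y : Y) => ∑ s, ∑ x1, d.joint s a.1 a.2.1 x1 a.2.2 y)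
  have h1 := mi_chain (A := d.U × d.V) (B := Y) (C := X2)
      (fun uv y x2 => ∑ s, ∑ x1, d.joint s uv.1 uv.2 x1 x2 y)
      (fun uv y x2 => Finset.sum_nonneg fun s _ => Finset.sum_nonneg fun x1 _ =>
        d.joint_nonneg_s8 s uv.1 uv.2 x1 x2 y)
  have e1 : d.iUVX2Y
      = mi (fun (x2 : X2) (y : Y) => ∑ uv : d.U × d.V, ∑ s, ∑ x1,
          d.joint s uv.1 uv.2 x1 x2 y) + d.iUVY_X2 :=
    hre.symm.trans h1
  have e2 : mi (fun (x2 : X2) (y : Y) => ∑ uv : d.U × d.V, ∑ s, ∑ x1,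
      d.joint s uv.1 uv.2 x1 x2 y) = d.iX2Y := by
    have hpt : ∀ (x2 : X2) (y : Y),
        (∑ uv : d.U × d.V, ∑ s, ∑ x1, d.joint s uv.1 uv.2 x1 x2 y)
        = ∑ s, ∑ u, ∑ v, ∑ x1, d.joint s u v x1 x2 y := by
      intro x2 y
      rw [Fintype.sum_prod_type]
      calc ∑ u, ∑ v, ∑ s, ∑ x1, d.joint s u v x1 x2 y
          = ∑ u, ∑ s, ∑ v, ∑ x1, d.joint s u v x1 x2 y :=
            Finset.sum_congr rfl fun u _ => Finset.sum_comm
        _ = ∑ s, ∑ u, ∑ v, ∑ x1, d.joint s u v x1 x2 y := Finset.sum_comm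
    exact congrArg mi (funext fun x2 => funext fun y => hpt x2 y)
  linarith

lemma iX2Y_nonneg : 0 ≤ d.iX2Y := by
  refine mi_nonneg _ (fun x2 y => Finset.sum_nonneg fun s _ => Finset.sum_nonneg fun u _ =>
    Finset.sum_nonneg fun v _ => Finset.sum_nonneg fun x1 _ =>
    d.joint_nonneg_s8 s u v x1 x2 y) ?_
  calc ∑ x2, ∑ y, ∑ s, ∑ u, ∑ v, ∑ x1, d.joint s u v x1 x2 y
      = ∑ x2, ∑ s, ∑ y, ∑ u, ∑ v, ∑ x1, d.joint s u v x1 x2 y :=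
        Finset.sum_congr rfl fun x2 _ => Finset.sum_comm
    _ = ∑ x2, ∑ s, ∑ u, ∑ y, ∑ v, ∑ x1, d.joint s u v x1 x2 y :=
        Finset.sum_congr rfl fun x2 _ => Finset.sum_congr rfl fun s _ => Finset.sum_comm
    _ = ∑ x2, ∑ s, ∑ u, ∑ v, ∑ y, ∑ x1, d.joint s u v x1 x2 y :=
        Finset.sum_congr rfl fun x2 _ => Finset.sum_congr rfl fun s _ =>
          Finset.sum_congr rfl fun u _ => Finset.sum_comm
    _ = ∑ x2, ∑ s, ∑ u, ∑ v, ∑ x1, ∑ y, d.joint s u v x1 x2 y :=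
        Finset.sum_congr rfl fun x2 _ => Finset.sum_congr rfl fun s _ =>
          Finset.sum_congr rfl fun u _ => Finset.sum_congr rfl fun v _ => Finset.sum_comm
    _ = ∑ x2, ∑ s, ∑ v, ∑ u, ∑ x1, ∑ y, d.joint s u v x1 x2 y :=
        Finset.sum_congr rfl fun x2 _ => Finset.sum_congr rfl fun s _ => Finset.sum_comm
    _ = ∑ x2, ∑ s, ch.Q s * d.pX2 x2 :=
        Finset.sum_congr rfl fun x2 _ => Finset.sum_congr rfl fun s _ => d.marg_X2S s x2
    _ = ∑ x2, d.pX2 x2 := by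
        refine Finset.sum_congr rfl fun x2 _ => ?_
        rw [← Finset.sum_mul, ch.Q_sum, one_mul]
    _ = 1 := d.pX2_sum

end AuxP

end FMEAux

/-- The rate region of the Wyner–Ziv-type scheme of Theorem 2 equals 𝒞: for every element
of 𝒫 the region obtained before Fourier–Motzkin elimination (with auxiliary rates `R0`, `R̂`)
coincides with the corresponding region of 𝒞, and the union over 𝒫 equals 𝒞. -/
theorem wynerZiv_region_eq_regionC {S X1 X2 Y : Type}
    [Fintype S] [Fintype X1] [Fintype X2] [Fintype Y] (ch : DMMAC S X1 X2 Y) :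
    (∀ d : AuxP ch,
      {r : ℝ × ℝ | 0 ≤ r.1 ∧ 0 ≤ r.2 ∧ ∃ R0 Rhat : ℝ,
        0 ≤ R0 ∧ R0 ≤ d.iX2Y ∧ d.iVS_X2 ≤ Rhat ∧
        r.2 ≤ d.iUY_VX2 - d.iUS_VX2 ∧
        (Rhat - R0) + r.2 ≤ d.iUVY_X2 - d.iUS_VX2 ∧
        r.1 + r.2 + Rhat ≤ d.iUVX2Y - d.iUS_VX2}
      = {r : ℝ × ℝ | 0 ≤ r.1 ∧ 0 ≤ r.2 ∧
          r.2 ≤ d.iUY_VX2 - d.iUS_VX2 ∧ r.1 + r.2 ≤ d.iUVX2Y - d.iUVX2S}) ∧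
    {r : ℝ × ℝ | 0 ≤ r.1 ∧ 0 ≤ r.2 ∧ ∃ (d : AuxP ch) (R0 Rhat : ℝ),
        0 ≤ R0 ∧ R0 ≤ d.iX2Y ∧ d.iVS_X2 ≤ Rhat ∧
        r.2 ≤ d.iUY_VX2 - d.iUS_VX2 ∧
        (Rhat - R0) + r.2 ≤ d.iUVY_X2 - d.iUS_VX2 ∧
        r.1 + r.2 + Rhat ≤ d.iUVX2Y - d.iUS_VX2} = regionC ch := by
  constructor
  · intro d
    have hA := d.iX2Y_nonneg
    have hY := d.chainY
    have hS := d.chainS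
    ext r
    simp only [Set.mem_setOf_eq]
    constructor
    · rintro ⟨h1, h2, R0, Rhat, hR00, hR0A, hBR, h3, h4, h5⟩
      exact ⟨h1, h2, h3, by linarith⟩
    · rintro ⟨h1, h2, h3, h4⟩
      exact ⟨h1, h2, d.iX2Y, d.iVS_X2, hA, le_refl _, le_refl _, h3, by linarith, by linarith⟩
  · ext r
    simp only [regionC, Set.mem_setOf_eq]
    constructor
    · rintro ⟨h1, h2, d, R0, Rhat, hR00, hR0A, hBR, h3, h4, h5⟩
      exact ⟨h1, h2, d, h3, by linarith [d.chainS]⟩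
    · rintro ⟨h1, h2, d, h3, h4⟩
      exact ⟨h1, h2, d, d.iX2Y, d.iVS_X2, d.iX2Y_nonneg, le_refl _, le_refl _, h3,
        by linarith [d.chainY, d.chainS], by linarith [d.chainS]⟩


end
end
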